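/- Sym-SE branch pruning bound (Case 1): let S,C be disjoint sets, let the pivot v̂ ∈ S satisfy δ̄(v̂, S∪C) > τ* where τ* is a nonnegative integer, and set a = τ* - δ̄(v̂,S) and b = δ̄(v̂,C), so a < b. Order C so that its first b elements are exactly the non-neighbors of v̂ in C. Then for every i ≥ a+2, the set S_i = S ∪ {v_1,...,v_{i-1}} satisfies Δ(S_i) ≥ τ* + 1 > τ*. -/

import Mathlib

open Finset
open scoped Classical

variable {V : Type*}

/-- Number of neighbors of `v` within `H`. -/
noncomputable def nbr (G : SimpleGraph V) (v : V) (H : Finset V) : ℕ :=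
  (H.filter (fun u => G.Adj v u)).card

/-- Number of non-neighbors of `v` within `H` (a vertex is a non-neighbor of itself). -/
noncomputable def nonNbr (G : SimpleGraph V) (v : V) (H : Finset V) : ℕ :=
  (H.filter (fun u => ¬ G.Adj v u)).card

/-- `Δ(H)`: the maximum number of non-neighbors of a vertex of `H` within `H` (0 for `∅`). -/
noncomputable def maxDisc (G : SimpleGraph V) (H : Finset V) : ℕ :=
  H.sup (fun v => nonNbr G v H)

/-- `τ(x) = ⌊(1-γ)x + γ⌋`. -/
noncomputable def tau (γ x : ℝ) : ℤ := ⌊(1 - γ) * x + γ⌋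

/-- `G[H]` is a `γ`-quasi-clique: the induced subgraph is connected and every
vertex of `H` has at least `⌈γ(|H|-1)⌉` neighbors within `H`. -/
def IsQC (G : SimpleGraph V) (γ : ℝ) (H : Finset V) : Prop :=
  (G.induce (H : Set V)).Connected ∧
    ∀ v ∈ H, (⌈γ * ((H.card : ℝ) - 1)⌉ : ℤ) ≤ (nbr G v H : ℤ)

/-- Sym-SE branch pruning bound (Case 1): with pivot `v̂ ∈ S`,
`a = τ* - δ̄(v̂,S)` and `b = δ̄(v̂,C)`, we get `a < b` and every branch
`B_i` with `i ≥ a + 2` satisfies `Δ(S_i) ≥ τ* + 1 > τ*`. -/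
theorem symSE_case1_pruning (G : SimpleGraph V) (S : Finset V) (l : List V)
    (hdisj : Disjoint S l.toFinset) (hnd : l.Nodup)
    (vhat : V) (hvS : vhat ∈ S) (τstar : ℕ)
    (hgt : τstar < nonNbr G vhat (S ∪ l.toFinset))
    (hle : nonNbr G vhat S ≤ τstar)
    (horder : (l.take (nonNbr G vhat l.toFinset)).toFinset =
      l.toFinset.filter (fun u => ¬ G.Adj vhat u)) :
    (τstar - nonNbr G vhat S) < nonNbr G vhat l.toFinset ∧
      ∀ i : ℕ, (τstar - nonNbr G vhat S) + 2 ≤ i →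
        τstar + 1 ≤ maxDisc G (S ∪ (l.take (i - 1)).toFinset) := by
    classical
  have hsplit : nonNbr G vhat (S ∪ l.toFinset) =
      nonNbr G vhat S + nonNbr G vhat l.toFinset := by
    unfold nonNbr
    rw [filter_union, card_union_of_disjoint]
    exact hdisj.mono (filter_subset _ _) (filter_subset _ _)
  set b := nonNbr G vhat l.toFinset with hb
  have hab : τstar - nonNbr G vhat S < b := by omega
  refine ⟨hab, ?_⟩
  intro i hi
  have hlenC : l.toFinset.card = l.length := List.toFinset_card_of_nodup hnd
  have hblen : b ≤ l.length := by
    have := card_filter_le l.toFinset (fun u => ¬ G.Adj vhat u)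
    rw [hlenC] at this
    exact this
  set m := min (i - 1) b with hm
  have hsub : (l.take m).toFinset ⊆
      ((l.take (i - 1)).toFinset).filter (fun u => ¬ G.Adj vhat u) := by
    intro x hx
    rw [List.mem_toFinset] at hx
    have hx1 : x ∈ l.take (i - 1) :=
      (List.take_prefix_take_left (min_le_left _ _)).subset hx
    have hx2 : x ∈ (l.take b).toFinset := by
      rw [List.mem_toFinset]
      exact (List.take_prefix_take_left (min_le_right _ _)).subset hx
    rw [horder, mem_filter] at hx2
    rw [mem_filter, List.mem_toFinset]
    exact ⟨hx1, hx2.2⟩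
  have hcardm : (l.take m).toFinset.card = m := by
    rw [List.toFinset_card_of_nodup (hnd.sublist (List.take_sublist _ _)),
      List.length_take]
    omega
  have hkey : m ≤ nonNbr G vhat ((l.take (i - 1)).toFinset) := by
    rw [nonNbr, ← hcardm]
    exact card_le_card hsub
  have hvmem : vhat ∈ S ∪ (l.take (i - 1)).toFinset := mem_union_left _ hvS
  have hmono : nonNbr G vhat (S ∪ (l.take (i - 1)).toFinset) =
      nonNbr G vhat S + nonNbr G vhat ((l.take (i - 1)).toFinset) := by
    unfold nonNbr
    rw [filter_union, card_union_of_disjoint]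
    refine (hdisj.mono_right ?_).mono (filter_subset _ _) (filter_subset _ _)
    intro x hx
    rw [List.mem_toFinset] at hx ⊢
    exact List.take_subset _ _ hx
  have hτ : τstar + 1 ≤ nonNbr G vhat (S ∪ (l.take (i - 1)).toFinset) := by
    rw [hmono]
    omega
  calc τstar + 1 ≤ _ := hτ
    _ ≤ maxDisc G (S ∪ (l.take (i - 1)).toFinset) := Finset.le_sup (f := fun v => nonNbr G v (S ∪ (l.take (i - 1)).toFinset)) hvmem
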